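/- Let G be a finite connected simple graph that is chordal, i.e. every cycle in G of length at least 4 has a chord (an edge of G joining two non-consecutive vertices of the cycle). Then there exists a tree T whose vertex set is the set of maximal cliques of G such that for every vertex v of G, the set of maximal cliques of G containing v induces a connected (hence tree) subgraph of T. -/

import Mathlib

open SimpleGraph Walk

universe u

variable {V : Type u}

/-- chordality property -/
def ChordalP (G : SimpleGraph V) : Prop :=
  ∀ (u : V) (c : G.Walk u u), c.IsCycle → 4 ≤ c.length →
      ∃ x y : V, G.Adj x y ∧ x ∈ c.support ∧ y ∈ c.support ∧ s(x, y) ∉ c.edges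

lemma exists_maximal_clique [Finite V] (G : SimpleGraph V) {s : Set V} (hs : G.IsClique s) :
    ∃ t : Set V, Maximal G.IsClique t ∧ s ⊆ t := by
  obtain ⟨t, ⟨ht, hst⟩, hmax⟩ : ∃ t ∈ {t : Set V | G.IsClique t ∧ s ⊆ t},
      ∀ a' ∈ {t : Set V | G.IsClique t ∧ s ⊆ t}, id t ≤ id a' → id t = id a' := by
    obtain ⟨t, ht, hm⟩ := Set.Finite.exists_maximal
      (s := {t : Set V | G.IsClique t ∧ s ⊆ t}) (Set.toFinite _) ⟨s, hs, subset_rfl⟩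
    exact ⟨t, ht, fun a' ha' hle => le_antisymm hle (hm ha' hle)⟩
  refine ⟨t, ⟨ht, fun u hu htu => ?_⟩, hst⟩
  have := hmax u ⟨hu, hst.trans htu⟩ htu
  simp only [id] at this
  exact this.symm.subset

lemma chordalP_induce {G : SimpleGraph V} (h : ChordalP G) (s : Set V) :
    ChordalP (G.induce s) := by
  intro u c hc hlen
  let f : G.induce s →g G := ⟨Subtype.val, fun {a b} hab => hab⟩
  have hinj : Function.Injective f := Subtype.val_injective
  have hc' : (c.map f).IsCycle := hc.map hinj
  have hlen' : 4 ≤ (c.map f).length := by rwa [Walk.length_map]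
  obtain ⟨x, y, hadj, hx, hy, he⟩ := h u (c.map f) hc' hlen'
  rw [Walk.support_map, List.mem_map] at hx hy
  obtain ⟨x', hx', rfl⟩ := hx
  obtain ⟨y', hy', rfl⟩ := hy
  refine ⟨x', y', hadj, hx', hy', fun hmem => he ?_⟩
  rw [Walk.edges_map, List.mem_map]
  exact ⟨s(x', y'), hmem, rfl⟩

lemma edge_mem_of_length_one {G : SimpleGraph V} {x y : V} (p : G.Walk x y)
    (h : p.length = 1) : s(x, y) ∈ p.edges := by
  cases p with
  | nil => simp at h
  | cons hadj q =>
    rename_i w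
    simp only [Walk.length_cons, Nat.add_right_cancel_iff] at h
    have h0 : q.length = 0 := by omega
    have : w = y := Walk.eq_of_length_eq_zero h0
    subst this
    simp

/-- shortcut lemma: a chord of a walk yields a strictly shorter walk with smaller support -/
lemma shortcut {G : SimpleGraph V} {st tt x y : V} (p : G.Walk st tt)
    (hadj : G.Adj x y) (hx : x ∈ p.support) (hy : y ∈ p.support)
    (he : s(x, y) ∉ p.edges) :
    ∃ q : G.Walk st tt, q.length < p.length ∧ ∀ z ∈ q.support, z ∈ p.support := by
  obtain ⟨q, r, rfl⟩ := Walk.mem_support_iff_exists_append.mp hx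
  rw [Walk.mem_support_append_iff] at hy
  rcases hy with hy | hy
  · -- y occurs in q (before x): shortcut from y straight to x
    obtain ⟨q1, q2, rfl⟩ := Walk.mem_support_iff_exists_append.mp hy
    refine ⟨q1.append (Walk.cons hadj.symm r), ?_, ?_⟩
    · simp only [Walk.length_append, Walk.length_cons]
      have h2 : 2 ≤ q2.length := by
        rcases Nat.lt_or_ge q2.length 2 with h | h
        · interval_cases hq : q2.length
          · exact absurd (Walk.eq_of_length_eq_zero hq) hadj.symm.ne
          · exfalso
            apply he
            have h1 : s(y, x) ∈ q2.edges := edge_mem_of_length_one q2 hq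
            rw [Sym2.eq_swap]
            rw [Walk.edges_append, Walk.edges_append, List.mem_append, List.mem_append]
            exact Or.inl (Or.inr h1)
        · exact h
      omega
    · intro z hz
      rw [Walk.mem_support_append_iff] at hz
      rcases hz with hz | hz
      · exact Walk.subset_support_append_left _ _ (Walk.subset_support_append_left _ _ hz)
      · rw [Walk.support_cons, List.mem_cons] at hz
        rcases hz with heq | hz
        · subst heq
          exact Walk.subset_support_append_left _ _
            (Walk.subset_support_append_left _ _ (Walk.end_mem_support q1))
        · exact Walk.subset_support_append_right _ _ hz
  · -- y occurs in r (after x): shortcut from x straight to y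
    obtain ⟨r1, r2, rfl⟩ := Walk.mem_support_iff_exists_append.mp hy
    refine ⟨q.append (Walk.cons hadj r2), ?_, ?_⟩
    · simp only [Walk.length_append, Walk.length_cons]
      have h2 : 2 ≤ r1.length := by
        rcases Nat.lt_or_ge r1.length 2 with h | h
        · interval_cases hq : r1.length
          · exact absurd (Walk.eq_of_length_eq_zero hq) hadj.ne
          · exfalso
            apply he
            have h1 : s(x, y) ∈ r1.edges := edge_mem_of_length_one r1 hq
            rw [Walk.edges_append, Walk.edges_append, List.mem_append, List.mem_append]
            exact Or.inr (Or.inl h1)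
        · exact h
      omega
    · intro z hz
      rw [Walk.mem_support_append_iff] at hz
      rcases hz with hz | hz
      · exact Walk.subset_support_append_left _ _ hz
      · rw [Walk.support_cons, List.mem_cons] at hz
        rcases hz with heq | hz
        · subst heq
          exact Walk.subset_support_append_left _ _ (Walk.end_mem_support q)
        · exact Walk.subset_support_append_right _ _
            (Walk.subset_support_append_right _ _ hz)

/-! ### Avoiding walks (separators) -/

/-- `Avoid G S x y`: there is a walk from `x` to `y` whose support avoids `S`. -/
def Avoid (G : SimpleGraph V) (S : Set V) (x y : V) : Prop :=
  ∃ p : G.Walk x y, ∀ z ∈ p.support, z ∉ S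

namespace Avoid

variable {G : SimpleGraph V} {S : Set V} {x y z : V}

lemma refl (h : x ∉ S) : Avoid G S x x := ⟨Walk.nil, by simp [h]⟩

lemma symm (h : Avoid G S x y) : Avoid G S y x := by
  obtain ⟨p, hp⟩ := h
  exact ⟨p.reverse, fun z hz => hp z (by rwa [Walk.support_reverse, List.mem_reverse] at hz)⟩

lemma trans (h : Avoid G S x y) (h' : Avoid G S y z) : Avoid G S x z := by
  obtain ⟨p, hp⟩ := h
  obtain ⟨q, hq⟩ := h'
  refine ⟨p.append q, fun w hw => ?_⟩
  rw [Walk.mem_support_append_iff] at hw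
  exact hw.elim (hp w) (hq w)

lemma not_mem_left (h : Avoid G S x y) : x ∉ S := by
  obtain ⟨p, hp⟩ := h; exact hp x p.start_mem_support

lemma not_mem_right (h : Avoid G S x y) : y ∉ S := by
  obtain ⟨p, hp⟩ := h; exact hp y p.end_mem_support

lemma adj (h : Avoid G S x y) (hadj : G.Adj y z) (hz : z ∉ S) : Avoid G S x z := by
  obtain ⟨p, hp⟩ := h
  refine ⟨p.append (Walk.cons hadj Walk.nil), fun w hw => ?_⟩
  rw [Walk.mem_support_append_iff] at hw
  rcases hw with hw | hw
  · exact hp w hw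
  · simp only [Walk.support_cons, Walk.support_nil, List.mem_cons, List.mem_singleton] at hw
    rcases hw with rfl | rfl | h; exacts [hp _ p.end_mem_support, hz, absurd h (by simp)]

lemma of_mem_support (p : G.Walk x y) (hp : ∀ w ∈ p.support, w ∉ S) (hz : z ∈ p.support) :
    Avoid G S x z := by
  classical
  exact ⟨p.takeUntil z hz, fun w hw => hp w (Walk.support_takeUntil_subset p hz hw)⟩

end Avoid

/-- split off the last edge of a nonnil walk -/
lemma exists_concat_rep {G : SimpleGraph V} {u w : V} (q : G.Walk u w) (h : ¬q.Nil) :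
    ∃ (x : V) (_ : G.Adj x w) (q' : G.Walk u x),
      q.support = q'.support ++ [w] ∧ s(x, w) ∈ q.edges := by
  induction q with
  | nil => simp at h
  | cons hadj r ih =>
    rename_i a c d
    by_cases hr : r.Nil
    · have hcd : c = d := hr.eq
      subst hcd
      have : r = Walk.nil := hr.eq_nil
      subst this
      exact ⟨a, hadj, Walk.nil, by simp, by simp⟩
    · obtain ⟨x, hx, q', hq', hq'e⟩ := ih hr
      exact ⟨x, hx, Walk.cons hadj q', by simp [Walk.support_cons, hq'],
        by rw [Walk.edges_cons]; exact List.mem_cons_of_mem _ hq'e⟩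

def IsSimplicial (G : SimpleGraph V) (v : V) : Prop := G.IsClique (G.neighborSet v)

lemma no_direct_walk {G : SimpleGraph V} {a b : V} (p : G.Walk a b) (hne : a ≠ b)
    (hab : ¬G.Adj a b) (hsup : ∀ z ∈ p.support, z = a ∨ z = b) : False := by
  cases p with
  | nil => exact hne rfl
  | cons h q =>
    rename_i w
    rcases hsup w (by simp [Walk.support_cons]) with rfl | rfl
    · exact h.ne rfl
    · exact hab h

theorem dirac : ∀ (n : ℕ) {V : Type u} [Fintype V] (G : SimpleGraph V),
    Fintype.card V ≤ n → ChordalP G → Nonempty V →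
    (∀ x y : V, x ≠ y → G.Adj x y) ∨
      ∃ u w : V, u ≠ w ∧ ¬G.Adj u w ∧ IsSimplicial G u ∧ IsSimplicial G w := by
  intro n
  induction n with
  | zero =>
    intro V _ G hcard _ hne
    have := @Fintype.card_pos V _ hne
    omega
  | succ n ih =>
    intro V _ G hcard hch hne
    by_cases hcomp : ∀ x y : V, x ≠ y → G.Adj x y
    · exact Or.inl hcomp
    right
    push_neg at hcomp
    obtain ⟨a, b, hab, hnadj⟩ := hcomp
    classical
    -- separators
    set sep : Set V → Prop := fun S => a ∉ S ∧ b ∉ S ∧ ¬Avoid G S a b with hsepdef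
    have hsepuniv : sep {a, b}ᶜ := by
      refine ⟨by simp, by simp, ?_⟩
      rintro ⟨p, hp⟩
      exact no_direct_walk p hab hnadj (fun z hz => by
        have := hp z hz
        simp only [Set.mem_compl_iff, Set.mem_insert_iff, Set.mem_singleton_iff,
          not_or, not_not] at this
        tauto)
    obtain ⟨S, hS, hmin⟩ : ∃ S ∈ {S | sep S}, ∀ a' ∈ {S | sep S}, id a' ≤ id S → id S = id a' := by
      obtain ⟨S, hS, hm⟩ := Set.Finite.exists_minimal (s := {S | sep S})
        (Set.toFinite _) ⟨_, hsepuniv⟩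
      exact ⟨S, hS, fun a' ha' hle => le_antisymm (hm ha' hle) hle⟩
    simp only [Set.mem_setOf_eq] at hS hmin
    set A : Set V := {x | Avoid G S a x} with hAdef
    set B : Set V := {x | Avoid G S b x} with hBdef
    have haA : a ∈ A := Avoid.refl hS.1
    have hbB : b ∈ B := Avoid.refl hS.2.1
    have hAS : ∀ x ∈ A, x ∉ S := fun x hx => hx.not_mem_right
    have hBS : ∀ x ∈ B, x ∉ S := fun x hx => hx.not_mem_right
    have hAB : ∀ x, x ∈ A → x ∈ B → False := fun x hx hy => hS.2.2 (hx.trans hy.symm)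
    have hAadj : ∀ x ∈ A, ∀ y, G.Adj x y → y ∉ S → y ∈ A := fun x hx y hadj hy =>
      Avoid.adj hx hadj hy
    have hBadj : ∀ x ∈ B, ∀ y, G.Adj x y → y ∉ S → y ∈ B := fun x hx y hadj hy =>
      Avoid.adj hx hadj hy
    -- every separator vertex has a neighbour in A and in B
    have hNA : ∀ s ∈ S, (∃ x ∈ A, G.Adj x s) ∧ (∃ x ∈ B, G.Adj x s) := by
      intro s hsS
      have hsub : ¬sep (S \ {s}) := by
        intro hsep
        have := hmin _ hsep Set.diff_subset
        simp only [id] at this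
        have hs' : s ∈ S \ {s} := this ▸ hsS
        simp at hs'
      have hav : Avoid G (S \ {s}) a b := by
        rw [hsepdef] at hsub
        simp only [not_and, not_not] at hsub
        exact hsub (fun h => hS.1 h.1) (fun h => hS.2.1 h.1)
      obtain ⟨p, hp⟩ := hav
      have hsp : s ∈ p.support := by
        by_contra h
        exact hS.2.2 ⟨p, fun z hz hzS => (hp z hz) ⟨hzS, fun heq => h (heq ▸ hz)⟩⟩
      have extract : ∀ (c d : V), c ∉ S → ∀ (p : G.Walk c d),
          (∀ z ∈ p.support, z ∉ S \ {s}) → s ∈ p.support →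
          ∃ x, Avoid G S c x ∧ G.Adj x s := by
        intro c d hc p hp hsp
        have hcount := p.count_support_takeUntil_eq_one hsp
        have hnil : ¬(p.takeUntil s hsp).Nil := Walk.not_nil_of_ne (fun h => hc (h ▸ hsS))
        obtain ⟨x, hadj, q', hq', -⟩ := exists_concat_rep (p.takeUntil s hsp) hnil
        have hsq' : s ∉ q'.support := by
          intro h
          rw [hq', List.count_append] at hcount
          have h1 : 0 < q'.support.count s := List.count_pos_iff.mpr h
          simp at hcount
          omega
        refine ⟨x, ⟨q', fun z hz hzS => ?_⟩, hadj⟩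
        have hzp : z ∈ p.support := p.support_takeUntil_subset hsp
          (by rw [hq']; exact List.mem_append_left _ hz)
        exact hp z hzp ⟨hzS, fun h => hsq' (h ▸ hz)⟩
      constructor
      · obtain ⟨x, hx, hadj⟩ := extract a b hS.1 p hp hsp
        exact ⟨x, hx, hadj⟩
      · obtain ⟨x, hx, hadj⟩ := extract b a hS.2.1 p.reverse
          (fun z hz => hp z (by rwa [Walk.support_reverse, List.mem_reverse] at hz))
          (by rwa [Walk.support_reverse, List.mem_reverse])
        exact ⟨x, hx, hadj⟩
    -- S is a clique
    have hSclique : G.IsClique S := by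
      rw [SimpleGraph.isClique_iff]
      intro s hsS t htS hst
      show G.Adj s t
      by_contra hnst
      obtain ⟨⟨xs, hxs, hxsadj⟩, ⟨ys, hys, hysadj⟩⟩ := hNA s hsS
      obtain ⟨⟨xt, hxt, hxtadj⟩, ⟨yt, hyt, hytadj⟩⟩ := hNA t htS
      -- minimal paths through each side
      have sideMin : ∀ (c : V), c ∉ S → ∀ xs xt : V, Avoid G S c xs → Avoid G S c xt →
          G.Adj xs s → G.Adj xt t →
          ∃ p : G.Walk s t, p.IsPath ∧ (∀ z ∈ p.support, z = s ∨ z = t ∨ Avoid G S c z) ∧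
            (∀ q : G.Walk s t, (∀ z ∈ q.support, z = s ∨ z = t ∨ Avoid G S c z) →
              p.length ≤ q.length) := by
        intro c hc xs xt hxs hxt hadjs hadjt
        obtain ⟨w, hw⟩ := hxs.symm.trans hxt
        set P : G.Walk s t → Prop :=
          fun q => ∀ z ∈ q.support, z = s ∨ z = t ∨ Avoid G S c z with hPdef
        have hP0 : ∃ q : G.Walk s t, P q := by
          refine ⟨Walk.cons hadjs.symm (w.concat hadjt), fun z hz => ?_⟩
          rw [Walk.support_cons, List.mem_cons] at hz
          rcases hz with rfl | hz
          · exact Or.inl rfl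
          rw [Walk.support_concat, List.mem_append,
            List.mem_singleton] at hz
          rcases hz with hz | rfl
          · exact Or.inr (Or.inr (hxs.trans (Avoid.of_mem_support w hw hz)))
          · exact Or.inr (Or.inl rfl)
        obtain ⟨q0, hq0⟩ := hP0
        set L : Set ℕ := {m | ∃ q : G.Walk s t, P q ∧ q.length = m} with hLdef
        have hLne : L.Nonempty := ⟨q0.length, q0, hq0, rfl⟩
        obtain ⟨q, hq, hqlen⟩ := Nat.sInf_mem hLne
        refine ⟨q.bypass, q.bypass_isPath, fun z hz => hq z (q.support_bypass_subset hz), ?_⟩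
        intro q' hq'
        calc q.bypass.length ≤ q.length := q.length_bypass_le
          _ = sInf L := hqlen
          _ ≤ q'.length := Nat.sInf_le ⟨q', hq', rfl⟩
      obtain ⟨p1, hp1path, hp1sup, hp1min⟩ := sideMin a hS.1 xs xt hxs hxt hxsadj hxtadj
      obtain ⟨p2, hp2path, hp2sup, hp2min⟩ := sideMin b hS.2.1 ys yt hys hyt hysadj hytadj
      have noAB : ∀ z : V, Avoid G S a z → (z = s ∨ z = t ∨ Avoid G S b z) → False := by
        rintro z hz (rfl | rfl | hz')
        · exact hz.not_mem_right hsS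
        · exact hz.not_mem_right htS
        · exact hS.2.2 (hz.trans hz'.symm)
      -- lengths are at least 2
      have hlen2 : ∀ p : G.Walk s t, s(s, t) ∉ p.edges → 2 ≤ p.length := by
        intro p hp
        rcases Nat.lt_or_ge p.length 2 with h | h
        · interval_cases hq : p.length
          · exact absurd (Walk.eq_of_length_eq_zero hq) hst
          · exact absurd (edge_mem_of_length_one p hq) hp
        · exact h
      have hne1 : s(s, t) ∉ p1.edges := fun h => hnst (p1.adj_of_mem_edges h)
      have hne2 : s(s, t) ∉ p2.edges := fun h => hnst (p2.adj_of_mem_edges h)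
      -- the cycle
      set c0 : G.Walk s s := p1.append p2.reverse with hc0def
      have hc0sup : ∀ z ∈ c0.support, z ∈ p1.support ∨ z ∈ p2.support := by
        intro z hz
        rw [hc0def, Walk.mem_support_append_iff] at hz
        rcases hz with hz | hz
        · exact Or.inl hz
        · rw [Walk.support_reverse, List.mem_reverse] at hz
          exact Or.inr hz
      have hp1t : ∀ z ∈ p1.support.tail, z = t ∨ Avoid G S a z := by
        intro z hz
        have hzs : z ≠ s := by
          intro rfl1
          subst rfl1
          have := hp1path.support_nodup
          rw [Walk.support_eq_cons] at this
          exact (List.nodup_cons.mp this).1 hz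
        rcases hp1sup z (List.mem_of_mem_tail hz) with h | h | h
        · exact absurd h hzs
        · exact Or.inl h
        · exact Or.inr h
      have hp2revt : ∀ z ∈ p2.reverse.support.tail, z = s ∨ Avoid G S b z := by
        intro z hz
        have hzt : z ≠ t := by
          intro rfl1
          subst rfl1
          have := hp2path.reverse.support_nodup
          rw [Walk.support_eq_cons] at this
          exact (List.nodup_cons.mp this).1 hz
        have hz' : z ∈ p2.support := by
          have := List.mem_of_mem_tail hz
          rwa [Walk.support_reverse, List.mem_reverse] at this
        rcases hp2sup z hz' with h | h | h
        · exact Or.inl h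
        · exact absurd h hzt
        · exact Or.inr h
      have hcyc : c0.IsCycle := by
        constructor
        · constructor
          · constructor
            rw [hc0def, Walk.edges_append, List.nodup_append]
            refine ⟨hp1path.isTrail.edges_nodup, (hp2path.reverse).isTrail.edges_nodup, ?_⟩
            intro e he1 e' he2 hee
            subst hee
            revert he1 he2
            induction e using Sym2.ind with
            | _ u v =>
              intro he1 he2
              have huv : G.Adj u v := p1.adj_of_mem_edges he1
              have hu1 := hp1sup u (Walk.fst_mem_support_of_mem_edges p1 he1)
              have hv1 := hp1sup v (Walk.snd_mem_support_of_mem_edges p1 he1)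
              have he2' : s(u, v) ∈ p2.edges := by
                rwa [Walk.edges_reverse, List.mem_reverse] at he2
              have hu2 := hp2sup u (Walk.fst_mem_support_of_mem_edges p2 he2')
              have hv2 := hp2sup v (Walk.snd_mem_support_of_mem_edges p2 he2')
              rcases hu1 with rfl | rfl | h
              · rcases hv1 with rfl | rfl | h
                · exact huv.ne rfl
                · exact hnst huv
                · exact noAB _ h hv2
              · rcases hv1 with rfl | rfl | h
                · exact hnst huv.symm
                · exact huv.ne rfl
                · exact noAB _ h hv2
              · exact noAB _ h hu2
          · intro h
            have : c0.length = 0 := by rw [h]; rfl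
            rw [hc0def, Walk.length_append, Walk.length_reverse] at this
            have := hlen2 p1 hne1
            omega
        · rw [hc0def, Walk.tail_support_append, List.nodup_append]
          refine ⟨hp1path.support_nodup.tail, (hp2path.reverse).support_nodup.tail, ?_⟩
          intro z hz1 z' hz2 hzz
          subst hzz
          rcases hp1t z hz1 with rfl | h
          · rcases hp2revt z hz2 with h' | h'
            · exact hst h'.symm
            · exact h'.not_mem_right htS
          · rcases hp2revt z hz2 with rfl | h'
            · exact h.not_mem_right hsS
            · exact hS.2.2 (h.trans h'.symm)
      have hlen4 : 4 ≤ c0.length := by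
        rw [hc0def, Walk.length_append, Walk.length_reverse]
        have := hlen2 p1 hne1
        have := hlen2 p2 hne2
        omega
      obtain ⟨x, y, hadjxy, hxsup, hysup, hechord⟩ := hch s c0 hcyc hlen4
      have short1 : x ∈ p1.support → y ∈ p1.support → False := by
        intro hx hy
        have hne : s(x, y) ∉ p1.edges := fun h => hechord (by
          rw [hc0def, Walk.edges_append, List.mem_append]; exact Or.inl h)
        obtain ⟨q, hqlen, hqsup⟩ := shortcut p1 hadjxy hx hy hne
        have := hp1min q (fun z hz => hp1sup z (hqsup z hz))
        omega
      have short2 : x ∈ p2.support → y ∈ p2.support → False := by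
        intro hx hy
        have hne : s(x, y) ∉ p2.edges := fun h => hechord (by
          rw [hc0def, Walk.edges_append, List.mem_append, Walk.edges_reverse,
            List.mem_reverse]
          exact Or.inr h)
        obtain ⟨q, hqlen, hqsup⟩ := shortcut p2 hadjxy hx hy hne
        have := hp2min q (fun z hz => hp2sup z (hqsup z hz))
        omega
      have mixed : ∀ u v : V, G.Adj u v → u ∈ p1.support → u ∉ p2.support →
          v ∈ p2.support → v ∉ p1.support → False := by
        intro u v huv hu1 hu2 hv2 hv1
        have huA : Avoid G S a u := by
          rcases hp1sup u hu1 with rfl | rfl | h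
          · exact absurd p2.start_mem_support hu2
          · exact absurd p2.end_mem_support hu2
          · exact h
        have hvB : Avoid G S b v := by
          rcases hp2sup v hv2 with rfl | rfl | h
          · exact absurd p1.start_mem_support hv1
          · exact absurd p1.end_mem_support hv1
          · exact h
        exact hS.2.2 ((huA.adj huv hvB.not_mem_right).trans hvB.symm)
      rcases hc0sup x hxsup with hx1 | hx2
      · rcases hc0sup y hysup with hy1 | hy2
        · exact short1 hx1 hy1
        · by_cases hy1 : y ∈ p1.support
          · exact short1 hx1 hy1
          by_cases hx2 : x ∈ p2.support
          · exact short2 hx2 hy2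
          exact mixed x y hadjxy hx1 hx2 hy2 hy1
      · rcases hc0sup y hysup with hy1 | hy2
        · by_cases hx1 : x ∈ p1.support
          · exact short1 hx1 hy1
          by_cases hy2 : y ∈ p2.support
          · exact short2 hx2 hy2
          exact mixed y x hadjxy.symm hy1 hy2 hx2 hx1
        · exact short2 hx2 hy2
    -- b is not in A ∪ S, a is not in B ∪ S
    have hbAS : b ∉ A ∪ S := by
      rintro (h | h)
      exacts [hS.2.2 h, hS.2.1 h]
    have haBS : a ∉ B ∪ S := by
      rintro (h | h)
      exacts [hS.2.2 h.symm, hS.1 h]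
    -- simplicial vertices on each side
    have side : ∀ (C : Set V), a ∈ C ∨ b ∈ C →
        (∀ x ∈ C, x ∉ S) → (∀ x ∈ C, ∀ y, G.Adj x y → y ∉ S → y ∈ C) →
        (b ∉ C ∪ S ∨ a ∉ C ∪ S) →
        ∃ x ∈ C, IsSimplicial G x := by
      intro C hcC hCS hCadj hout
      set U : Set V := C ∪ S with hUdef
      have hcU : ∃ c, c ∈ C := by
        rcases hcC with h | h
        exacts [⟨a, h⟩, ⟨b, h⟩]
      obtain ⟨c, hc⟩ := hcU
      haveI : Fintype U := Fintype.ofFinite _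
      have hval : ∀ z : V, z ∈ Set.range (Subtype.val : U → V) ↔ z ∈ U := by
        intro z
        simp [Subtype.range_coe_subtype]
      have hcardU : Fintype.card U < Fintype.card V := by
        rcases hout with h | h
        · exact Fintype.card_lt_of_injective_of_notMem Subtype.val Subtype.val_injective
            (fun hb => h ((hval b).mp hb))
        · exact Fintype.card_lt_of_injective_of_notMem Subtype.val Subtype.val_injective
            (fun ha => h ((hval a).mp ha))
      have hHch : ChordalP (G.induce U) := chordalP_induce hch U
      have hHne : Nonempty U := ⟨⟨c, Or.inl hc⟩⟩
      have hadjU : ∀ (x y : U), (G.induce U).Adj x y ↔ G.Adj x.1 y.1 := by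
        intro x y
        simp [SimpleGraph.comap_adj]
      have transfer : ∀ x : U, x.1 ∈ C → IsSimplicial (G.induce U) x → IsSimplicial G x.1 := by
        intro x hxC hx
        rw [IsSimplicial, SimpleGraph.isClique_iff] at hx ⊢
        intro y hy z hz hyz
        rw [SimpleGraph.mem_neighborSet] at hy hz
        have hyU : y ∈ U := by
          by_cases hyS : y ∈ S
          · exact Or.inr hyS
          · exact Or.inl (hCadj x.1 hxC y hy hyS)
        have hzU : z ∈ U := by
          by_cases hzS : z ∈ S
          · exact Or.inr hzS
          · exact Or.inl (hCadj x.1 hxC z hz hzS)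
        have hmem1 : (⟨y, hyU⟩ : U) ∈ (G.induce U).neighborSet x := by
          rw [SimpleGraph.mem_neighborSet, hadjU]
          exact hy
        have hmem2 : (⟨z, hzU⟩ : U) ∈ (G.induce U).neighborSet x := by
          rw [SimpleGraph.mem_neighborSet, hadjU]
          exact hz
        have := hx hmem1 hmem2 (fun h => hyz (congrArg Subtype.val h))
        rwa [hadjU] at this
      rcases ih (G.induce U) (by omega) hHch hHne with hcomp' | ⟨u, w, huw, hnadj', hsu, hsw⟩
      · refine ⟨c, hc, transfer ⟨c, Or.inl hc⟩ hc ?_⟩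
        rw [IsSimplicial, SimpleGraph.isClique_iff]
        intro y _ z _ hyz
        exact hcomp' y z hyz
      · have hone : u.1 ∈ C ∨ w.1 ∈ C := by
          by_contra h
          push_neg at h
          have huS : u.1 ∈ S := (u.2.resolve_left h.1)
          have hwS : w.1 ∈ S := (w.2.resolve_left h.2)
          exact hnadj' (hSclique huS hwS (fun h' => huw (Subtype.ext h')))
        rcases hone with h | h
        · exact ⟨u.1, h, transfer u h hsu⟩
        · exact ⟨w.1, h, transfer w h hsw⟩
    obtain ⟨xA, hxA, hsA⟩ := side A (Or.inl haA) hAS hAadj (Or.inl hbAS)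
    obtain ⟨xB, hxB, hsB⟩ := side B (Or.inr hbB) hBS hBadj (Or.inr haBS)
    refine ⟨xA, xB, fun h => hAB xA hxA (h ▸ hxB), fun h => ?_, hsA, hsB⟩
    · exact hAB xB (hAadj xA hxA xB h (hBS xB hxB)) hxB

/-! ### helpers for the junction tree construction -/

lemma connected_of_subsingleton {α : Type*} (H : SimpleGraph α) (hne : Nonempty α)
    (hss : ∀ a b : α, a = b) : H.Connected := by
  haveI := hne
  refine SimpleGraph.Connected.mk ?_
  intro u v
  rw [hss u v]

lemma exists_simplicial [Fintype V] (G : SimpleGraph V) (hch : ChordalP G)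
    (hne : Nonempty V) : ∃ v : V, IsSimplicial G v := by
  rcases dirac (Fintype.card V) G le_rfl hch hne with h | ⟨u, w, _, _, hu, _⟩
  · obtain ⟨v⟩ := hne
    refine ⟨v, ?_⟩
    intro y hy z hz hyz
    exact h y z hyz
  · exact ⟨u, hu⟩

lemma pair_isClique {G : SimpleGraph V} {x y : V} (h : G.Adj x y) :
    G.IsClique {x, y} := by
  intro a ha b hb hab
  rcases ha with rfl | rfl <;> rcases hb with rfl | rfl
  · exact absurd rfl hab
  · exact h
  · exact h.symm
  · exact absurd rfl hab

lemma maximal_clique_nonempty {G : SimpleGraph V} {C : Set V} (h : Maximal G.IsClique C)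
    (hne : Nonempty V) : C.Nonempty := by
  by_contra hc
  rw [Set.not_nonempty_iff_eq_empty] at hc
  subst hc
  obtain ⟨w⟩ := hne
  have h1 : G.IsClique {w} := by simp
  have := h.2 h1 (Set.empty_subset _)
  simp at this

/-- Adding a pendant edge at an isolated vertex preserves acyclicity. -/
lemma pendant_acyclic {α : Type*} (T₀ : SimpleGraph α) (hT₀ : T₀.IsAcyclic)
    (x₀ c₀ : α) (hne : x₀ ≠ c₀) (hiso : ∀ y, ¬T₀.Adj x₀ y) :
    SimpleGraph.IsAcyclic
      (SimpleGraph.fromRel (fun a b => T₀.Adj a b ∨ (a = x₀ ∧ b = c₀))) := by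
  classical
  set T := SimpleGraph.fromRel (fun a b => T₀.Adj a b ∨ (a = x₀ ∧ b = c₀)) with hTdef
  have hTadj : ∀ a b, T.Adj a b ↔ a ≠ b ∧ (T₀.Adj a b ∨ (a = x₀ ∧ b = c₀) ∨ (a = c₀ ∧ b = x₀)) := by
    intro a b
    rw [hTdef, SimpleGraph.fromRel_adj]
    tauto
  have hTx : ∀ y, T.Adj x₀ y → y = c₀ := by
    intro y hy
    rw [hTadj] at hy
    rcases hy.2 with h | h | h
    · exact absurd h (hiso y)
    · exact h.2
    · exact absurd h.1 hne
  intro u c hc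
  by_cases hx : x₀ ∈ c.support
  · -- rotate the cycle to start at x₀; both cycle edges at x₀ must be the pendant edge
    have hc' := hc.rotate hx
    set d := c.rotate x₀ hx with hd
    clear_value d
    cases d with
    | nil => exact hc'.ne_nil rfl
    | cons h q =>
      rename_i w
      have hw : w = c₀ := hTx w h
      -- get the last edge of q : T.Walk w x₀
      have hqnil : ¬q.Nil := by
        intro hnil
        exact hne (hnil.eq ▸ hw)
      obtain ⟨z, hz, q', hq', hlast0⟩ := exists_concat_rep q hqnil
      have hzc : z = c₀ := hTx z hz.symm
      have hlast : s(x₀, w) ∈ q.edges := by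
        have : s(z, x₀) = s(x₀, w) := by
          rw [hzc, hw, Sym2.eq_swap]
        rwa [this] at hlast0
      have := hc'.edges_nodup
      rw [Walk.edges_cons, List.nodup_cons] at this
      exact this.1 hlast
  · -- transfer to T₀
    have hedges : ∀ e ∈ c.edges, e ∈ T₀.edgeSet := by
      intro e he
      revert he
      induction e using Sym2.ind with
      | _ a b =>
        intro he
        have hadj : T.Adj a b := c.adj_of_mem_edges he
        rw [hTadj] at hadj
        rcases hadj.2 with h | h | h
        · exact h
        · exact absurd (h.1 ▸ Walk.fst_mem_support_of_mem_edges c he) hx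
        · exact absurd (h.2 ▸ Walk.snd_mem_support_of_mem_edges c he) hx
    exact hT₀ (c.transfer T₀ hedges) (hc.transfer hedges)

lemma mem_support_exists_adj {G : SimpleGraph V} {x y : V} (p : G.Walk x y) {z : V}
    (h : z ∈ p.support) : z = y ∨ ∃ w, G.Adj z w := by
  induction p with
  | nil => simp at h; exact Or.inl h
  | cons hadj q ih =>
    rw [Walk.support_cons, List.mem_cons] at h
    rcases h with rfl | h
    · exact Or.inr ⟨_, hadj⟩
    · exact ih h

lemma junction_of_edgeless [Fintype V] (G : SimpleGraph V) (hE : ∀ x y : V, ¬G.Adj x y) :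
    ∃ T : SimpleGraph {s : Set V // Maximal G.IsClique s},
      T.IsAcyclic ∧ ∀ v : V,
        (T.induce {c : {s : Set V // Maximal G.IsClique s} | v ∈ (c : Set V)}).Connected := by
  have key : ∀ (v : V) (C : Set V), Maximal G.IsClique C → v ∈ C → C = {v} := by
    intro v C hC hv
    apply Set.Subset.antisymm
    · intro x hx
      by_contra hxv
      exact hE x v (hC.1 hx hv hxv)
    · simp [hv]
  have keymax : ∀ v : V, Maximal G.IsClique {v} := by
    intro v
    constructor
    · simp
    · intro t ht hsub
      intro x hx
      by_contra hxv
      exact hE x v (ht hx (hsub rfl) hxv)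
  refine ⟨⊥, SimpleGraph.isAcyclic_bot, fun v => ?_⟩
  apply connected_of_subsingleton
  · exact ⟨⟨⟨{v}, keymax v⟩, rfl⟩⟩
  · rintro ⟨⟨C, hC⟩, hvC⟩ ⟨⟨D, hD⟩, hvD⟩
    have h1 : C = {v} := key v C hC hvC
    have h2 : D = {v} := key v D hD hvD
    subst h1; subst h2
    rfl

theorem junction_forest : ∀ (m : ℕ) {V : Type u} [Fintype V] (G : SimpleGraph V),
    G.edgeSet.ncard ≤ m → ChordalP G →
    ∃ T : SimpleGraph {s : Set V // Maximal G.IsClique s},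
      T.IsAcyclic ∧ ∀ v : V,
        (T.induce {c : {s : Set V // Maximal G.IsClique s} | v ∈ (c : Set V)}).Connected := by
  intro m
  induction m with
  | zero =>
    intro V _ G hm hch
    refine junction_of_edgeless G fun x y hxy => ?_
    have h2 : G.edgeSet = ∅ := by
      rw [← Set.ncard_eq_zero (Set.toFinite G.edgeSet)]
      omega
    have h1 : s(x, y) ∈ G.edgeSet := hxy
    rw [h2] at h1
    exact h1
  | succ m ih =>
    intro V _ G hm hch
    classical
    by_cases hE : ∃ x y : V, G.Adj x y
    swap
    · push_neg at hE
      exact junction_of_edgeless G hE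
    obtain ⟨x0, y0, hxy0⟩ := hE
    -- find a non-isolated simplicial vertex v
    obtain ⟨v, hvnb, hsimp⟩ : ∃ v : V, (∃ y, G.Adj v y) ∧ IsSimplicial G v := by
      set W : Set V := {x : V | ∃ y, G.Adj x y} with hWdef
      haveI : Fintype W := Fintype.ofFinite _
      have hWne : Nonempty W := ⟨⟨x0, y0, hxy0⟩⟩
      obtain ⟨vh, hvh⟩ := exists_simplicial (G.induce W) (chordalP_induce hch W) hWne
      refine ⟨vh.1, vh.2, ?_⟩
      rw [IsSimplicial, SimpleGraph.isClique_iff]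
      intro y hy z hz hyz
      rw [SimpleGraph.mem_neighborSet] at hy hz
      have hyW : y ∈ W := ⟨vh.1, hy.symm⟩
      have hzW : z ∈ W := ⟨vh.1, hz.symm⟩
      have h1 : (⟨y, hyW⟩ : W) ∈ (G.induce W).neighborSet vh := by
        rw [SimpleGraph.mem_neighborSet]
        simpa using hy
      have h2 : (⟨z, hzW⟩ : W) ∈ (G.induce W).neighborSet vh := by
        rw [SimpleGraph.mem_neighborSet]
        simpa using hz
      have := hvh h1 h2 (fun h => hyz (congrArg Subtype.val h))
      simpa using this
    -- delete all edges at v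
    set G' : SimpleGraph V :=
      { Adj := fun x y => G.Adj x y ∧ x ≠ v ∧ y ≠ v,
        symm := ⟨fun x y h => ⟨h.1.symm, h.2.2, h.2.1⟩⟩,
        loopless := ⟨fun x h => G.loopless.irrefl x h.1⟩ } with hG'def
    have hG'adj : ∀ x y : V, G'.Adj x y ↔ G.Adj x y ∧ x ≠ v ∧ y ≠ v := fun _ _ => Iff.rfl
    have hle : G' ≤ G := fun x y h => h.1
    have hm' : G'.edgeSet.ncard ≤ m := by
      obtain ⟨y1, hy1⟩ := hvnb
      have hss : G'.edgeSet ⊂ G.edgeSet := by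
        constructor
        · exact SimpleGraph.edgeSet_mono hle
        · intro hsub
          have h1 : s(v, y1) ∈ G.edgeSet := hy1
          have h2 := hsub h1
          rw [SimpleGraph.mem_edgeSet, hG'adj] at h2
          exact h2.2.1 rfl
      have := Set.ncard_lt_ncard hss (Set.toFinite _)
      omega
    have hch' : ChordalP G' := by
      intro u c hcyc hlen
      have hunv : u ≠ v := by
        cases c with
        | nil => exact absurd rfl hcyc.ne_nil
        | cons h q => exact h.2.1
      have hvsup : v ∉ c.support := by
        intro hv
        rcases mem_support_exists_adj c hv with h | ⟨w, hw⟩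
        · exact hunv h.symm
        · exact hw.2.1 rfl
      let f : G' →g G := ⟨id, fun h => h.1⟩
      have hfid : ⇑f = id := rfl
      have hcyc' : (c.map f).IsCycle := hcyc.map (by rw [hfid]; exact fun _ _ h => h)
      have hlen' : 4 ≤ (c.map f).length := by rwa [Walk.length_map]
      obtain ⟨x, y, hadj, hx, hy, he⟩ := hch u (c.map f) hcyc' hlen'
      rw [Walk.support_map, hfid, List.map_id] at hx hy
      refine ⟨x, y, ⟨hadj, fun h => hvsup (h ▸ hx), fun h => hvsup (h ▸ hy)⟩, hx, hy, ?_⟩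
      intro hmem
      apply he
      rw [Walk.edges_map, List.mem_map]
      exact ⟨s(x, y), hmem, by rw [hfid]; simp⟩
    obtain ⟨T', hT'ac, hT'conn⟩ := ih G' hm' hch'
    -- basic clique facts
    set Nv : Set V := insert v (G.neighborSet v) with hNvdef
    have hNvclique : G.IsClique Nv := by
      intro x hx y hy hxy
      rcases hx with rfl | hx <;> rcases hy with rfl | hy
      · exact absurd rfl hxy
      · exact hy
      · exact hx.symm
      · exact hsimp hx hy hxy
    have hNvmax : Maximal G.IsClique Nv := by
      refine ⟨hNvclique, fun t ht hsub x hx => ?_⟩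
      by_cases hxv : x = v
      · exact hxv ▸ Or.inl rfl
      · exact Or.inr ((ht hx (hsub (Or.inl rfl)) hxv).symm)
    have huniq : ∀ C : Set V, Maximal G.IsClique C → v ∈ C → C = Nv := by
      intro C hC hv
      have hsub : C ⊆ Nv := by
        intro x hx
        by_cases hxv : x = v
        · exact hxv ▸ Or.inl rfl
        · exact Or.inr ((hC.1 hx hv hxv).symm)
      exact Set.Subset.antisymm hsub (hC.2 hNvclique hsub)
    have hcliq_iff : ∀ s : Set V, v ∉ s → (G'.IsClique s ↔ G.IsClique s) := by
      intro s hv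
      constructor
      · intro h x hx y hy hxy
        exact (h hx hy hxy).1
      · intro h x hx y hy hxy
        exact ⟨h hx hy hxy, fun hh => hv (hh ▸ hx), fun hh => hv (hh ▸ hy)⟩
    have hsub_single : ∀ t : Set V, G'.IsClique t → v ∈ t → t ⊆ {v} := by
      intro t ht hv x hx
      by_contra hxv
      have := ht hx hv (by simpa using hxv)
      exact this.2.2 rfl
    have hsingle : Maximal G'.IsClique {v} := by
      refine ⟨by simp, fun t ht hsub => hsub_single t ht (hsub rfl)⟩
    have hsingle_only : ∀ C' : Set V, Maximal G'.IsClique C' → v ∈ C' → C' = {v} := by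
      intro C' hC' hv
      exact Set.Subset.antisymm (hsub_single C' hC'.1 hv) (by simpa using hv)
    have hVne : Nonempty V := ⟨v⟩
    have hto' : ∀ C : Set V, Maximal G.IsClique C → C ≠ Nv →
        v ∉ C ∧ Maximal G'.IsClique C := by
      intro C hC hne
      have hvC : v ∉ C := fun hv => hne (huniq C hC hv)
      refine ⟨hvC, (hcliq_iff C hvC).2 hC.1, fun t ht hsubt => ?_⟩
      by_cases hvt : v ∈ t
      · have h1 : t ⊆ {v} := hsub_single t ht hvt
        obtain ⟨x, hx⟩ := maximal_clique_nonempty hC hVne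
        have : x = v := h1 (hsubt hx)
        exact absurd (this ▸ hx) hvC
      · exact hC.2 ((hcliq_iff t hvt).1 ht) hsubt
    have hNbrcliq' : G'.IsClique (G.neighborSet v) := by
      refine (hcliq_iff _ (by simp)).2 ?_
      intro x hx y hy hxy
      exact hsimp hx hy hxy
    have hfrom' : ∀ C' : Set V, Maximal G'.IsClique C' → C' ≠ {v} →
        v ∉ C' ∧ G.IsClique C' ∧ (Maximal G.IsClique C' ∨ C' = G.neighborSet v) := by
      intro C' hC' hne
      have hvC' : v ∉ C' := fun hv => hne (hsingle_only C' hC' hv)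
      have hGc : G.IsClique C' := (hcliq_iff C' hvC').1 hC'.1
      refine ⟨hvC', hGc, ?_⟩
      by_cases hmaxG : Maximal G.IsClique C'
      · exact Or.inl hmaxG
      obtain ⟨D, hD, hCD⟩ := exists_maximal_clique G hGc
      by_cases hvD : v ∈ D
      · have hDNv : D = Nv := huniq D hD hvD
        have hC'N : C' ⊆ G.neighborSet v := by
          intro x hx
          have : x ∈ Nv := hDNv ▸ hCD hx
          rcases this with rfl | h
          · exact absurd hx hvC'
          · exact h
        exact Or.inr (Set.Subset.antisymm hC'N (hC'.2 hNbrcliq' hC'N))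
      · have : Maximal G'.IsClique D := ⟨(hcliq_iff D hvD).2 hD.1, fun t ht hsubt => by
          by_cases hvt : v ∈ t
          · have h1 : t ⊆ {v} := hsub_single t ht hvt
            obtain ⟨x, hx⟩ := maximal_clique_nonempty hD hVne
            have : x = v := h1 (hsubt hx)
            exact absurd (this ▸ hx) hvD
          · exact hD.2 ((hcliq_iff t hvt).1 ht) hsubt⟩
        have hDC : D ⊆ C' := hC'.2 this.1 hCD
        have : C' = D := Set.Subset.antisymm hCD hDC
        exact Or.inl (this ▸ hD)
    set nv : {s : Set V // Maximal G.IsClique s} := ⟨Nv, hNvmax⟩ with hnvdef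
    obtain ⟨y1, hy1⟩ := hvnb
    have hy1mem : y1 ∈ G.neighborSet v := hy1
    have hNv_ne_single : Nv ≠ ({v} : Set V) := by
      intro h
      have : y1 ∈ Nv := Or.inr hy1mem
      rw [h] at this
      exact hy1.ne' (by simpa using this)
    have hnbr_ne_max : ∀ D : Set V, Maximal G.IsClique D → D ≠ G.neighborSet v := by
      intro D hD h
      have hsubNv : D ⊆ Nv := by rw [h]; exact Set.subset_insert _ _
      have : Nv ⊆ D := hD.2 hNvclique hsubNv
      have hv : v ∈ D := this (Or.inl rfl)
      rw [h] at hv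
      exact G.loopless.irrefl v hv
    by_cases hNmax : Maximal G'.IsClique (G.neighborSet v)
    · -- Case A: N(v) is a maximal clique of G'; pure transport
      set g : {s : Set V // Maximal G.IsClique s} → {s : Set V // Maximal G'.IsClique s} :=
        fun C => if h : C.1 = Nv then ⟨G.neighborSet v, hNmax⟩
          else ⟨C.1, (hto' C.1 C.2 h).2⟩ with hgdef
      have hgval_pos : ∀ C, C.1 = Nv → (g C).1 = G.neighborSet v := by
        intro C h; rw [hgdef]; simp [h]
      have hgval_neg : ∀ C, C.1 ≠ Nv → (g C).1 = C.1 := by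
        intro C h; rw [hgdef]; simp [h]
      have hginj : Function.Injective g := by
        intro C D h
        have hval : (g C).1 = (g D).1 := congrArg Subtype.val h
        by_cases hC : C.1 = Nv <;> by_cases hD : D.1 = Nv
        · exact Subtype.ext (hC.trans hD.symm)
        · rw [hgval_pos C hC, hgval_neg D hD] at hval
          exact absurd hval.symm (hnbr_ne_max D.1 D.2)
        · rw [hgval_neg C hC, hgval_pos D hD] at hval
          exact absurd hval (hnbr_ne_max C.1 C.2)
        · rw [hgval_neg C hC, hgval_neg D hD] at hval
          exact Subtype.ext hval
      refine ⟨T'.comap g, ?_, ?_⟩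
      · intro u c hc
        let f : T'.comap g →g T' := ⟨g, fun {a b} h => h⟩
        exact hT'ac _ (hc.map (f := f) hginj)
      · intro u
        by_cases huv : u = v
        · subst huv
          apply connected_of_subsingleton
          · exact ⟨⟨nv, Or.inl rfl⟩⟩
          · rintro ⟨⟨C, hC⟩, hvC⟩ ⟨⟨D, hD⟩, hvD⟩
            have h1 : C = Nv := huniq C hC hvC
            have h2 : D = Nv := huniq D hD hvD
            subst h1; subst h2; rfl
        · -- u ≠ v : transport connectivity from T'
          have hmem : ∀ C : {s : Set V // Maximal G.IsClique s}, u ∈ C.1 → u ∈ (g C).1 := by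
            intro C hu
            by_cases h : C.1 = Nv
            · rw [hgval_pos C h]
              rcases (h ▸ hu : u ∈ Nv) with h' | h'
              · exact absurd h' huv
              · exact h'
            · rw [hgval_neg C h]; exact hu
          set gi : {s : Set V // Maximal G'.IsClique s} → {s : Set V // Maximal G.IsClique s} :=
            fun C' => if h : Maximal G.IsClique C'.1 then ⟨C'.1, h⟩ else nv with hgidef
          have hgiv_pos : ∀ C', Maximal G.IsClique C'.1 → (gi C').1 = C'.1 := by
            intro C' h; rw [hgidef]; simp [h]
          have hgiv_neg : ∀ C', ¬Maximal G.IsClique C'.1 → gi C' = nv := by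
            intro C' h; rw [hgidef]; simp [h]
          have hC'cases : ∀ C' : {s : Set V // Maximal G'.IsClique s}, u ∈ C'.1 →
              Maximal G.IsClique C'.1 ∨ C'.1 = G.neighborSet v := by
            intro C' hu
            have hne : C'.1 ≠ {v} := by
              intro h
              rw [h] at hu
              exact huv (by simpa using hu)
            exact (hfrom' C'.1 C'.2 hne).2.2
          have hgig : ∀ C : {s : Set V // Maximal G.IsClique s}, gi (g C) = C := by
            intro C
            by_cases h : C.1 = Nv
            · have h1 := hgval_pos C h
              have h2 : ¬Maximal G.IsClique (g C).1 := by
                rw [h1]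
                intro hmax
                exact hnbr_ne_max _ hmax rfl
              rw [hgiv_neg _ h2]
              exact Subtype.ext (by rw [hnvdef]; exact h.symm)
            · have h1 := hgval_neg C h
              have h2 : Maximal G.IsClique (g C).1 := h1 ▸ C.2
              exact Subtype.ext (by rw [hgiv_pos _ h2, h1])
          have hggi : ∀ C' : {s : Set V // Maximal G'.IsClique s}, u ∈ C'.1 → g (gi C') = C' := by
            intro C' hu
            rcases hC'cases C' hu with h | h
            · have h1 := hgiv_pos C' h
              apply Subtype.ext
              have hne : (gi C').1 ≠ Nv := by
                rw [h1]
                intro hh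
                have hv' : v ∈ C'.1 := hh ▸ Or.inl rfl
                exact hNv_ne_single (hh ▸ hsingle_only C'.1 C'.2 hv')
              rw [hgval_neg _ hne, h1]
            · have h2 : ¬Maximal G.IsClique C'.1 := by
                rw [h]
                intro hmax
                exact hnbr_ne_max _ hmax rfl
              rw [hgiv_neg _ h2]
              apply Subtype.ext
              rw [hgval_pos nv rfl, h]
          have hmemgi : ∀ C' : {s : Set V // Maximal G'.IsClique s}, u ∈ C'.1 → u ∈ (gi C').1 := by
            intro C' hu
            rcases hC'cases C' hu with h | h
            · rw [hgiv_pos C' h]; exact hu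
            · have h2 : ¬Maximal G.IsClique C'.1 := by
                rw [h]; intro hmax; exact hnbr_ne_max _ hmax rfl
              rw [hgiv_neg _ h2]
              exact Or.inr (h ▸ hu)
          set S : Set {s : Set V // Maximal G.IsClique s} := {c | u ∈ (c : Set V)} with hSdef
          set S' : Set {s : Set V // Maximal G'.IsClique s} := {c | u ∈ (c : Set V)} with hS'def
          let φ : (T'.induce S') →g ((T'.comap g).induce S) :=
            ⟨fun p => ⟨gi p.1, hmemgi p.1 p.2⟩, by
              rintro ⟨C', hC'⟩ ⟨D', hD'⟩ hadj
              show T'.Adj (g (gi C')) (g (gi D'))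
              rw [hggi C' hC', hggi D' hD']
              exact hadj⟩
          have hφsurj : Function.Surjective φ := by
            rintro ⟨C, hC⟩
            refine ⟨⟨g C, hmem C hC⟩, ?_⟩
            apply Subtype.ext
            exact hgig C
          exact SimpleGraph.Connected.map φ hφsurj (hT'conn u)
    · -- Case B: N(v) not maximal in G'; add a pendant node
      obtain ⟨t0, ht0c, ht0sub, ht0not⟩ :
          ∃ t : Set V, G'.IsClique t ∧ G.neighborSet v ⊆ t ∧ ¬t ⊆ G.neighborSet v := by
        by_contra h
        push_neg at h
        exact hNmax ⟨hNbrcliq', fun t ht hsub => h t ht hsub⟩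
      have hvt0 : v ∉ t0 := by
        intro hv
        have h1 := hsub_single t0 ht0c hv
        exact hy1.ne' (h1 (ht0sub hy1mem))
      have ht0G : G.IsClique t0 := (hcliq_iff t0 hvt0).1 ht0c
      obtain ⟨C0, hC0max, ht0C0⟩ := exists_maximal_clique G ht0G
      have hC0ne : C0 ≠ Nv := by
        intro h
        apply ht0not
        intro x hx
        rcases (h ▸ ht0C0 hx : x ∈ Nv) with h' | h'
        · exact absurd (h' ▸ hx) hvt0
        · exact h'
      have hnbrC0 : G.neighborSet v ⊆ C0 := ht0sub.trans ht0C0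
      have hvC0 : v ∉ C0 := (hto' C0 hC0max hC0ne).1
      set c0 : {s : Set V // Maximal G.IsClique s} := ⟨C0, hC0max⟩ with hc0def
      have hnvc0 : nv ≠ c0 := fun h => hC0ne (congrArg Subtype.val h).symm
      set g : {s : Set V // Maximal G.IsClique s} → {s : Set V // Maximal G'.IsClique s} :=
        fun C => if h : C.1 = Nv then ⟨{v}, hsingle⟩
          else ⟨C.1, (hto' C.1 C.2 h).2⟩ with hgdef
      have hgval_neg : ∀ C, C.1 ≠ Nv → (g C).1 = C.1 := by
        intro C h; rw [hgdef]; simp [h]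
      -- the base graph and its pendant extension
      set T₀ : SimpleGraph {s : Set V // Maximal G.IsClique s} :=
        { Adj := fun C D => C ≠ nv ∧ D ≠ nv ∧ T'.Adj (g C) (g D),
          symm := ⟨fun C D h => ⟨h.2.1, h.1, h.2.2.symm⟩⟩,
          loopless := ⟨fun C h => T'.loopless.irrefl _ h.2.2⟩ } with hT₀def
      have hT₀adj : ∀ C D, T₀.Adj C D ↔ C ≠ nv ∧ D ≠ nv ∧ T'.Adj (g C) (g D) :=
        fun _ _ => Iff.rfl
      have hT₀ac : T₀.IsAcyclic := by
        intro u c hc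
        have hginj' : Function.Injective
            (fun C : {s : Set V // Maximal G.IsClique s} => g C) := by
          intro C D h
          have hval : (g C).1 = (g D).1 := congrArg Subtype.val h
          by_cases hC : C.1 = Nv <;> by_cases hD : D.1 = Nv
          · exact Subtype.ext (hC.trans hD.symm)
          · rw [hgdef] at hval
            simp [hC, hD] at hval
            have hv' : v ∈ D.1 := by rw [← hval]; exact rfl
            exact absurd hv' (hto' D.1 D.2 hD).1
          · rw [hgdef] at hval
            simp [hC, hD] at hval
            have hv' : v ∈ C.1 := by rw [hval]; exact rfl
            exact absurd hv' (hto' C.1 C.2 hC).1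
          · rw [hgval_neg C hC, hgval_neg D hD] at hval
            exact Subtype.ext hval
        let f : T₀ →g T' := ⟨g, fun {a b} h => h.2.2⟩
        exact hT'ac _ (hc.map (f := f) hginj')
      set T : SimpleGraph {s : Set V // Maximal G.IsClique s} :=
        SimpleGraph.fromRel (fun a b => T₀.Adj a b ∨ (a = nv ∧ b = c0)) with hTdef
      have hTadj : ∀ a b, T.Adj a b ↔
          a ≠ b ∧ (T₀.Adj a b ∨ (a = nv ∧ b = c0) ∨ (a = c0 ∧ b = nv)) := by
        intro a b
        rw [hTdef, SimpleGraph.fromRel_adj]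
        constructor
        · rintro ⟨hne, h | h⟩
          · tauto
          · rcases h with h | h
            · exact ⟨hne, Or.inl h.symm⟩
            · tauto
        · rintro ⟨hne, h | h | h⟩
          · exact ⟨hne, Or.inl (Or.inl h)⟩
          · exact ⟨hne, Or.inl (Or.inr h)⟩
          · exact ⟨hne, Or.inr (Or.inr ⟨h.2, h.1⟩)⟩
      refine ⟨T, ?_, ?_⟩
      · exact pendant_acyclic T₀ hT₀ac nv c0 hnvc0 (fun y h => h.1 rfl)
      · intro u
        by_cases huv : u = v
        · subst huv
          apply connected_of_subsingleton
          · exact ⟨⟨nv, Or.inl rfl⟩⟩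
          · rintro ⟨⟨C, hC⟩, hvC⟩ ⟨⟨D, hD⟩, hvD⟩
            have h1 : C = Nv := huniq C hC hvC
            have h2 : D = Nv := huniq D hD hvD
            subst h1; subst h2; rfl
        · set S : Set {s : Set V // Maximal G.IsClique s} := {c | u ∈ (c : Set V)} with hSdef
          -- facts about maximal G'-cliques containing u
          have hC'max : ∀ C' : {s : Set V // Maximal G'.IsClique s}, u ∈ C'.1 →
              Maximal G.IsClique C'.1 := by
            intro C' hu
            have hne1 : C'.1 ≠ {v} := by
              intro h
              rw [h] at hu
              exact huv (by simpa using hu)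
            have hne2 : C'.1 ≠ G.neighborSet v := by
              intro h
              exact hNmax (h ▸ C'.2)
            rcases (hfrom' C'.1 C'.2 hne1).2.2 with h | h
            · exact h
            · exact absurd h hne2
          have hnv1 : ∀ C' : {s : Set V // Maximal G'.IsClique s}, u ∈ C'.1 → C'.1 ≠ Nv := by
            intro C' hu h
            have hv' : v ∈ C'.1 := h ▸ Or.inl rfl
            exact hNv_ne_single (h ▸ hsingle_only C'.1 C'.2 hv')
          set gi : {s : Set V // Maximal G'.IsClique s} → {s : Set V // Maximal G.IsClique s} :=
            fun C' => if h : Maximal G.IsClique C'.1 then ⟨C'.1, h⟩ else nv with hgidef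
          have hgiv : ∀ C', Maximal G.IsClique C'.1 → (gi C').1 = C'.1 := by
            intro C' h; rw [hgidef]; simp [h]
          have hggi : ∀ C' : {s : Set V // Maximal G'.IsClique s}, u ∈ C'.1 → g (gi C') = C' := by
            intro C' hu
            have h1 := hgiv C' (hC'max C' hu)
            apply Subtype.ext
            have hne : (gi C').1 ≠ Nv := by rw [h1]; exact hnv1 C' hu
            rw [hgval_neg _ hne, h1]
          have hgig : ∀ C : {s : Set V // Maximal G.IsClique s}, C ≠ nv → gi (g C) = C := by
            intro C h
            have hne : C.1 ≠ Nv := fun hh => h (Subtype.ext hh)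
            have h1 := hgval_neg C hne
            have h2 : Maximal G.IsClique (g C).1 := h1 ▸ C.2
            exact Subtype.ext (by rw [hgiv _ h2, h1])
          have hginv : ∀ C' : {s : Set V // Maximal G'.IsClique s}, u ∈ C'.1 → gi C' ≠ nv := by
            intro C' hu h
            have := hgiv C' (hC'max C' hu)
            rw [h] at this
            exact hnv1 C' hu this.symm
          -- reachability among non-pendant nodes
          have hW : ∀ (p q : ↥S), p.1 ≠ nv → q.1 ≠ nv →
              (T.induce S).Reachable p q := by
            rintro ⟨C, hC⟩ ⟨D, hD⟩ hCnv hDnv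
            simp only at hCnv hDnv
            have hmC : u ∈ (g C).1 := by
              rw [hgval_neg C (fun hh => hCnv (Subtype.ext hh))]; exact hC
            have hmD : u ∈ (g D).1 := by
              rw [hgval_neg D (fun hh => hDnv (Subtype.ext hh))]; exact hD
            let ψ : (T'.induce {c' : {s : Set V // Maximal G'.IsClique s} | u ∈ (c' : Set V)}) →g
                (T.induce S) :=
              ⟨fun p => ⟨gi p.1, by
                have := hgiv p.1 (hC'max p.1 p.2)
                show u ∈ (gi p.1).1
                rw [this]
                exact p.2⟩, by
                rintro ⟨C', hC'⟩ ⟨D', hD'⟩ hadj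
                show T.Adj (gi C') (gi D')
                have hadj' : T'.Adj C' D' := hadj
                rw [hTadj]
                constructor
                · intro h
                  apply hadj'.ne
                  have := congrArg g h
                  rw [hggi C' hC', hggi D' hD'] at this
                  exact this
                · refine Or.inl ⟨hginv C' hC', hginv D' hD', ?_⟩
                  rw [hggi C' hC', hggi D' hD']
                  exact hadj'⟩
            have hreach := (hT'conn u).preconnected ⟨g C, hmC⟩ ⟨g D, hmD⟩
            have := hreach.map ψ
            have he1 : ψ ⟨g C, hmC⟩ = ⟨C, hC⟩ := Subtype.ext (hgig C hCnv)
            have he2 : ψ ⟨g D, hmD⟩ = ⟨D, hD⟩ := Subtype.ext (hgig D hDnv)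
            rwa [he1, he2] at this
          -- assemble connectivity
          have hSne : Nonempty ↥S := by
            obtain ⟨Cu, hCu, huCu⟩ := exists_maximal_clique G
              (show G.IsClique {u} by simp)
            exact ⟨⟨⟨Cu, hCu⟩, huCu rfl⟩⟩
          haveI := hSne
          refine SimpleGraph.Connected.mk ?_
          rintro ⟨C, hC⟩ ⟨D, hD⟩
          by_cases hCnv : C = nv <;> by_cases hDnv : D = nv
          · subst hCnv; subst hDnv
            rfl
          · -- C = nv : go through the pendant edge
            subst hCnv
            have huNbr : u ∈ G.neighborSet v := by
              rcases (hC : u ∈ Nv) with h | h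
              · exact absurd h huv
              · exact h
            have hc0S : u ∈ c0.1 := hnbrC0 huNbr
            have hedge : (T.induce S).Adj ⟨nv, hC⟩ ⟨c0, hc0S⟩ := by
              show T.Adj nv c0
              rw [hTadj]
              exact ⟨hnvc0, Or.inr (Or.inl ⟨rfl, rfl⟩)⟩
            exact hedge.reachable.trans (hW ⟨c0, hc0S⟩ ⟨D, hD⟩ hnvc0.symm hDnv)
          · subst hDnv
            have huNbr : u ∈ G.neighborSet v := by
              rcases (hD : u ∈ Nv) with h | h
              · exact absurd h huv
              · exact h
            have hc0S : u ∈ c0.1 := hnbrC0 huNbr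
            have hedge : (T.induce S).Adj ⟨c0, hc0S⟩ ⟨nv, hD⟩ := by
              show T.Adj c0 nv
              rw [hTadj]
              exact ⟨hnvc0.symm, Or.inr (Or.inr ⟨rfl, rfl⟩)⟩
            exact (hW ⟨C, hC⟩ ⟨c0, hc0S⟩ hCnv hnvc0.symm).trans hedge.reachable
          · exact hW ⟨C, hC⟩ ⟨D, hD⟩ hCnv hDnv


/-- Every finite connected chordal graph (every cycle of length at least 4 has
a chord) admits a junction tree: a tree on its maximal cliques in which, for
every vertex `v`, the maximal cliques containing `v` induce a connected
subgraph. -/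
theorem chordal_junction_tree
    {V : Type*} [Fintype V] (G : SimpleGraph V) (hconn : G.Connected)
    (hchordal : ∀ (u : V) (c : G.Walk u u), c.IsCycle → 4 ≤ c.length →
      ∃ x y : V, G.Adj x y ∧ x ∈ c.support ∧ y ∈ c.support ∧ s(x, y) ∉ c.edges) :
    ∃ T : SimpleGraph {s : Set V // Maximal G.IsClique s},
      T.IsTree ∧
      ∀ v : V,
        (T.induce {c : {s : Set V // Maximal G.IsClique s} | v ∈ (c : Set V)}).Connected := by
  classical
  obtain ⟨T, hac, hcond⟩ := junction_forest (G.edgeSet.ncard) G le_rfl hchordal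
  have hVne : Nonempty V := hconn.nonempty
  have hshare : ∀ (x : V) (C D : {s : Set V // Maximal G.IsClique s}),
      x ∈ C.1 → x ∈ D.1 → T.Reachable C D := by
    intro x C D hC hD
    have h := (hcond x).preconnected ⟨C, hC⟩ ⟨D, hD⟩
    let ι : (T.induce {c : {s : Set V // Maximal G.IsClique s} | x ∈ (c : Set V)}) →g T :=
      ⟨Subtype.val, fun {a b} h => h⟩
    exact h.map ι
  have hwalk : ∀ (x y : V) (p : G.Walk x y) (C D : {s : Set V // Maximal G.IsClique s}),
      x ∈ C.1 → y ∈ D.1 → T.Reachable C D := by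
    intro x y p
    induction p with
    | nil =>
      intro C D hC hD
      exact hshare _ C D hC hD
    | cons hadj q ihq =>
      rename_i a b c
      intro C D hC hD
      obtain ⟨E, hE, hsub⟩ := exists_maximal_clique G (pair_isClique hadj)
      exact (hshare a C ⟨E, hE⟩ hC (hsub (Or.inl rfl))).trans
        (ihq ⟨E, hE⟩ D (hsub (Or.inr rfl)) hD)
  have hTconn : T.Connected := by
    haveI : Nonempty {s : Set V // Maximal G.IsClique s} := by
      obtain ⟨w⟩ := hVne
      obtain ⟨C, hC, -⟩ := exists_maximal_clique G (show G.IsClique {w} by simp)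
      exact ⟨⟨C, hC⟩⟩
    refine SimpleGraph.Connected.mk ?_
    intro C D
    obtain ⟨x, hx⟩ := maximal_clique_nonempty C.2 hVne
    obtain ⟨y, hy⟩ := maximal_clique_nonempty D.2 hVne
    obtain ⟨p⟩ := hconn x y
    exact hwalk x y p C D hx hy
  exact ⟨T, ⟨hTconn, hac⟩, hcond⟩
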